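/- The tip of a weighted cone over a walk multiplet is a walk singlet: with G, g, p, and H the weighted cone as above, the new vertex c = N+1 satisfies (H^k)_{uc} = p·(H^k)_{vc} for all non-negative integers k. -/

import Mathlib

/-- The tip of a weighted cone over a walk multiplet is a walk singlet:
`(H^k)_{u,c} = p (H^k)_{v,c}` for the new tip vertex `c`. -/
theorem stmt6 {N : ℕ} (G : Matrix (Fin N) (Fin N) ℝ) (hsymm : G.IsSymm)
    (u v : Fin N) (g : Fin N → ℝ) (p : ℝ) (hp : p = 1 ∨ p = -1)
    (hcosp : ∀ k : ℕ, (G ^ k) u u = (G ^ k) v v)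
    (hmul : ∀ k : ℕ, ((G ^ k).mulVec g) u = p * ((G ^ k).mulVec g) v)
    (H : Matrix (Fin N ⊕ Unit) (Fin N ⊕ Unit) ℝ)
    (hH : H = Matrix.fromBlocks G (Matrix.of fun i _ => g i)
      (Matrix.of fun _ j => g j) 0) :
    ∀ k : ℕ, (H ^ k) (Sum.inl u) (Sum.inr ()) = p * (H ^ k) (Sum.inl v) (Sum.inr ()) := by
  subst hH
  set M : Matrix (Fin N ⊕ Unit) (Fin N ⊕ Unit) ℝ :=
    Matrix.fromBlocks G (Matrix.of fun i _ => g i) (Matrix.of fun _ j => g j) 0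
    with hM
  set S : Submodule ℝ (Fin N → ℝ) :=
    Submodule.span ℝ (Set.range fun j : ℕ => (G ^ j).mulVec g) with hSdef
  have hgS : g ∈ S := Submodule.subset_span ⟨0, by simp⟩
  have hGS : ∀ x ∈ S, G.mulVec x ∈ S := by
    intro x hx
    have hmem : G.mulVecLin x ∈ S.map G.mulVecLin := Submodule.mem_map_of_mem hx
    rw [hSdef, Submodule.map_span] at hmem
    refine Submodule.span_le.mpr ?_ hmem
    rintro _ ⟨_, ⟨j, rfl⟩, rfl⟩
    refine Submodule.subset_span ⟨j + 1, ?_⟩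
    simp [Matrix.mulVecLin_apply, Matrix.mulVec_mulVec, pow_succ']
  have hxuv : ∀ x ∈ S, x u = p * x v := by
    intro x hx
    let f : (Fin N → ℝ) →ₗ[ℝ] ℝ :=
      { toFun := fun y => y u - p * y v
        map_add' := fun a b => by simp; ring
        map_smul' := fun c a => by simp [smul_eq_mul]; ring }
    have hker : x ∈ LinearMap.ker f := by
      refine Submodule.span_le.mpr ?_ hx
      rintro _ ⟨j, rfl⟩
      simp only [SetLike.mem_coe, LinearMap.mem_ker]
      show ((G ^ j).mulVec g) u - p * ((G ^ j).mulVec g) v = 0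
      rw [hmul j]; ring
    have : x u - p * x v = 0 := hker
    linarith
  have key : ∀ k : ℕ, ∃ x ∈ S, ∃ t : ℝ,
      (∀ i, (M ^ k) (Sum.inl i) (Sum.inr ()) = x i) ∧
      (M ^ k) (Sum.inr ()) (Sum.inr ()) = t := by
    intro k
    induction k with
    | zero =>
      refine ⟨0, Submodule.zero_mem S, 1, ?_, ?_⟩ <;> simp [Matrix.one_apply]
    | succ k ih =>
      obtain ⟨x, hxS, t, h1, h2⟩ := ih
      refine ⟨G.mulVec x + t • g, S.add_mem (hGS x hxS) (S.smul_mem t hgS),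
        ∑ j, g j * x j, ?_, ?_⟩
      · intro i
        rw [pow_succ', Matrix.mul_apply]
        rw [Fintype.sum_sum_type]
        simp only [h1, h2]
        simp only [hM, Matrix.fromBlocks_apply₁₁, Matrix.fromBlocks_apply₁₂,
          Matrix.of_apply, h1, h2]
        simp [Matrix.mulVec, dotProduct]
        ring
      · rw [pow_succ', Matrix.mul_apply]
        rw [Fintype.sum_sum_type]
        simp only [h1, h2]
        simp only [hM, Matrix.fromBlocks_apply₂₁, Matrix.fromBlocks_apply₂₂,
          Matrix.of_apply, Matrix.zero_apply, h1]
        simp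
  intro k
  obtain ⟨x, hxS, t, h1, _⟩ := key k
  rw [h1 u, h1 v]
  exact hxuv x hxS
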